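/- Let K be a non-spherically complete, complete, algebraically closed non-archimedean valued field of characteristic p > 0, with spherically complete immediate extension K^∨. Let x ∈ K^∨ \ K with |x| = 1 and r = d(x,K). Then for all m ≥ 1, the quotient norm satisfies ‖π(x^{p^m})‖ ≤ r^{p^m} and d(x^{p^m}, span_K{1, x, ..., x^{p^{m-1}}}) ≥ r^{p^m}; consequently {π(x), π(x^p), π(x^{p^2}), ...} is an orthogonal subset of K^∨/K. -/

import Mathlib

open Metric

/-- A metric space is spherically complete if every nonempty chain of closed balls
has nonempty intersection. -/
def SphericallyComplete (X : Type*) [MetricSpace X] : Prop :=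
  ∀ c : Set (Set X), c.Nonempty → (∀ s ∈ c, ∃ z r, s = Metric.closedBall z r) →
    IsChain (· ⊆ ·) c → (⋂₀ c).Nonempty

/-- The equivalence relation on `K^∨ \ K`: `x ~ y` iff there are `λ, μ ∈ K` with
`|y - (λx + μ)| ≤ d(y, K)`. -/
def HoleEquiv (K : Type*) {Kv : Type*} [NormedField K] [NormedField Kv] [Algebra K Kv]
    (x y : Kv) : Prop :=
  ∃ l m : K, ‖y - (algebraMap K Kv l * x + algebraMap K Kv m)‖ ≤
    Metric.infDist y (Set.range (algebraMap K Kv))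

namespace Stmt6Aux

open Polynomial

variable {K Kv : Type*} [NontriviallyNormedField K] [NormedField Kv]
  [IsUltrametricDist Kv] [Algebra K Kv]

/-- Quotient "seminorm": distance to the image of `K`. -/
noncomputable def q (K : Type*) {Kv : Type*} [NontriviallyNormedField K] [NormedField Kv]
    [Algebra K Kv] (z : Kv) : ℝ :=
  Metric.infDist z (Set.range (algebraMap K Kv))

lemma q_def (z : Kv) : q K z = Metric.infDist z (Set.range (algebraMap K Kv)) := rfl

lemma q_nonneg (z : Kv) : 0 ≤ q K z := Metric.infDist_nonneg

lemma q_le (z : Kv) (a : K) : q K z ≤ ‖z - algebraMap K Kv a‖ := by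
  simpa [q_def, dist_eq_norm] using
    Metric.infDist_le_dist_of_mem (Set.mem_range_self (f := algebraMap K Kv) a)

lemma le_q {b : ℝ} {z : Kv} (h : ∀ a : K, b ≤ ‖z - algebraMap K Kv a‖) : b ≤ q K z := by
  by_contra hlt
  push_neg at hlt
  obtain ⟨y, ⟨a, rfl⟩, hy⟩ := (Metric.infDist_lt_iff ⟨_, Set.mem_range_self 0⟩).mp hlt
  rw [dist_eq_norm] at hy
  exact absurd (h a) (by linarith)

lemma q_exists_lt (z : Kv) {ε : ℝ} (hε : 0 < ε) :
    ∃ a : K, ‖z - algebraMap K Kv a‖ < q K z + ε := by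
  have : Metric.infDist z (Set.range (algebraMap K Kv)) < q K z + ε := by
    rw [← q_def]; linarith
  obtain ⟨y, ⟨a, rfl⟩, hy⟩ := (Metric.infDist_lt_iff ⟨_, Set.mem_range_self 0⟩).mp this
  exact ⟨a, by simpa [dist_eq_norm] using hy⟩

lemma q_zero : q K (0 : Kv) = 0 := by
  refine le_antisymm ?_ (q_nonneg _)
  simpa using q_le (K := K) (0 : Kv) 0

lemma q_neg (z : Kv) : q K (-z) = q K z := by
  have key : ∀ w : Kv, q K (-w) ≤ q K w := by
    intro w
    refine le_of_forall_pos_le_add fun ε hε => ?_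
    obtain ⟨a, ha⟩ := q_exists_lt (K := K) w hε
    calc q K (-w) ≤ ‖-w - algebraMap K Kv (-a)‖ := q_le _ _
      _ = ‖w - algebraMap K Kv a‖ := by rw [map_neg, ← norm_neg]; ring_nf
      _ ≤ q K w + ε := ha.le
  refine le_antisymm (key z) ?_
  simpa using key (-z)

lemma q_add_le (v w : Kv) : q K (v + w) ≤ max (q K v) (q K w) := by
  refine le_of_forall_pos_le_add fun ε hε => ?_
  obtain ⟨a, ha⟩ := q_exists_lt (K := K) v hε
  obtain ⟨b, hb⟩ := q_exists_lt (K := K) w hε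
  calc q K (v + w) ≤ ‖v + w - algebraMap K Kv (a + b)‖ := q_le _ _
    _ = ‖(v - algebraMap K Kv a) + (w - algebraMap K Kv b)‖ := by rw [map_add]; ring_nf
    _ ≤ max ‖v - algebraMap K Kv a‖ ‖w - algebraMap K Kv b‖ :=
        IsUltrametricDist.norm_add_le_max _ _
    _ ≤ max (q K v) (q K w) + ε := by
        apply max_le
        · exact le_trans ha.le (by have := le_max_left (q K v) (q K w); linarith)
        · exact le_trans hb.le (by have := le_max_right (q K v) (q K w); linarith)

lemma q_smul_le (hiso : ∀ a : K, ‖algebraMap K Kv a‖ = ‖a‖) (a : K) (v : Kv) :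
    q K (algebraMap K Kv a * v) ≤ ‖a‖ * q K v := by
  rcases eq_or_ne a 0 with rfl | ha
  · simp [q_zero]
  · refine le_of_forall_pos_le_add fun ε hε => ?_
    have hna : 0 < ‖a‖ := norm_pos_iff.mpr ha
    obtain ⟨b, hb⟩ := q_exists_lt (K := K) v (div_pos hε hna)
    calc q K (algebraMap K Kv a * v) ≤ ‖algebraMap K Kv a * v - algebraMap K Kv (a * b)‖ :=
          q_le _ _
      _ = ‖a‖ * ‖v - algebraMap K Kv b‖ := by
          rw [map_mul, ← mul_sub, norm_mul, hiso]
      _ ≤ ‖a‖ * (q K v + ε / ‖a‖) := mul_le_mul_of_nonneg_left hb.le (norm_nonneg _)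
      _ = ‖a‖ * q K v + ε := by rw [mul_add, mul_div_cancel₀ ε (ne_of_gt hna)]

lemma q_sum_le {n : ℕ} (v : Fin n → Kv) {b : ℝ} (hb : 0 ≤ b) (h : ∀ i, q K (v i) ≤ b) :
    q K (∑ i, v i) ≤ b := by
  induction n with
  | zero => simpa [q_zero] using hb
  | succ n ih =>
    rw [Fin.sum_univ_castSucc]
    refine le_trans (q_add_le _ _) (max_le ?_ (h _))
    exact ih _ fun i => h _

/-- Key algebraic lemma: since `K` is algebraically closed, the distance from `x ^ N`
to the span of lower powers of `x` is at least `d(x, K) ^ N`. -/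
lemma key_pow (hiso : ∀ a : K, ‖algebraMap K Kv a‖ = ‖a‖) [IsAlgClosed K] (x : Kv)
    (N : ℕ) (z : Kv)
    (hz : z ∈ Submodule.span K (Set.range fun j : Fin N => x ^ (j : ℕ))) :
    q K x ^ N ≤ ‖x ^ N - z‖ := by
  obtain ⟨c, rfl⟩ := (Submodule.mem_span_range_iff_exists_fun K).mp hz
  set P : K[X] := X ^ N - ∑ i : Fin N, C (c i) * X ^ (i : ℕ) with hP
  have hdeglt : (∑ i : Fin N, C (c i) * X ^ (i : ℕ)).degree < (N : WithBot ℕ) := by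
    refine lt_of_le_of_lt (Polynomial.degree_sum_le _ _) ?_
    rw [Finset.sup_lt_iff (by exact_mod_cast WithBot.bot_lt_coe N)]
    intro i _
    exact lt_of_le_of_lt (Polynomial.degree_C_mul_X_pow_le _ _) (by exact_mod_cast i.isLt)
  have hdeg : P.degree = N := by
    rw [hP, Polynomial.degree_sub_eq_left_of_degree_lt
      (by simpa [Polynomial.degree_X_pow] using hdeglt), Polynomial.degree_X_pow]
  have hmonic : P.Monic := by
    show P.leadingCoeff = 1
    rw [Polynomial.leadingCoeff, Polynomial.natDegree_eq_of_degree_eq_some hdeg, hP]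
    simp only [Polynomial.coeff_sub, Polynomial.coeff_X_pow, if_pos rfl]
    rw [Polynomial.finset_sum_coeff]
    have hc0 : ∀ i : Fin N, (C (c i) * X ^ (i : ℕ)).coeff N = 0 := by
      intro i
      rw [Polynomial.coeff_C_mul, Polynomial.coeff_X_pow, if_neg (Nat.ne_of_lt i.isLt).symm,
        mul_zero]
    simp [hc0]
  have hsplits : P.Splits := IsAlgClosed.splits P
  have hcard : Multiset.card P.roots = N := by
    rw [Polynomial.splits_iff_card_roots.mp hsplits,
      Polynomial.natDegree_eq_of_degree_eq_some hdeg]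
  have hfact : P = (Multiset.map (fun a => X - C a) P.roots).prod :=
    hsplits.eq_prod_roots_of_monic hmonic
  have heval : Polynomial.aeval x P = x ^ N - ∑ i : Fin N, c i • x ^ (i : ℕ) := by
    rw [hP]
    simp [Algebra.smul_def]
  have heval2 : Polynomial.aeval x P =
      (Multiset.map (fun a => x - algebraMap K Kv a) P.roots).prod := by
    conv_lhs => rw [hfact]
    rw [map_multiset_prod, Multiset.map_map]
    congr 1
    refine Multiset.map_congr rfl fun a _ => ?_
    simp
  have haux : ∀ s : Multiset K,
      q K x ^ Multiset.card s ≤ ‖(Multiset.map (fun a => x - algebraMap K Kv a) s).prod‖ := by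
    intro s
    induction s using Multiset.induction_on with
    | empty => simp
    | cons a s ih =>
      rw [Multiset.map_cons, Multiset.prod_cons, Multiset.card_cons, norm_mul, pow_succ,
        mul_comm (q K x ^ Multiset.card s) (q K x)]
      exact mul_le_mul (q_le _ _) ih (pow_nonneg (q_nonneg x) _) (norm_nonneg _)
  calc q K x ^ N = q K x ^ Multiset.card P.roots := by rw [hcard]
    _ ≤ ‖(Multiset.map (fun a => x - algebraMap K Kv a) P.roots).prod‖ := haux _
    _ = ‖x ^ N - ∑ i : Fin N, c i • x ^ (i : ℕ)‖ := by rw [← heval2, heval]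

end Stmt6Aux

open Stmt6Aux in
theorem stmt6 {K Kv : Type*} [NontriviallyNormedField K] [CompleteSpace K]
    [IsUltrametricDist K] [IsAlgClosed K] (p : ℕ) [Fact p.Prime] [CharP K p]
    [NormedField Kv] [IsUltrametricDist Kv] [Algebra K Kv]
    (hiso : ∀ a : K, ‖algebraMap K Kv a‖ = ‖a‖)
    (hKns : ¬ SphericallyComplete K)
    (hsph : SphericallyComplete Kv)
    (himm : ∀ z : Kv, z ≠ 0 → ∃ a : K, ‖z - algebraMap K Kv a‖ < ‖z‖)
    (x : Kv) (hx : x ∉ Set.range (algebraMap K Kv)) (hx1 : ‖x‖ = 1) :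
    (∀ m : ℕ, 1 ≤ m →
      Metric.infDist (x ^ p ^ m) (Set.range (algebraMap K Kv)) ≤
        Metric.infDist x (Set.range (algebraMap K Kv)) ^ p ^ m ∧
      Metric.infDist x (Set.range (algebraMap K Kv)) ^ p ^ m ≤
        Metric.infDist (x ^ p ^ m)
          ((Submodule.span K (Set.range fun j : Fin (p ^ (m - 1) + 1) =>
            x ^ (j : ℕ)) : Submodule K Kv) : Set Kv)) ∧
    ∀ (n : ℕ) (c : Fin n → K),
      Metric.infDist (∑ i, algebraMap K Kv (c i) * x ^ p ^ (i : ℕ))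
          (Set.range (algebraMap K Kv)) =
        ⨆ i : Fin n, ‖c i‖ *
          Metric.infDist (x ^ p ^ (i : ℕ)) (Set.range (algebraMap K Kv)) := by
  classical
  have hp2 : 2 ≤ p := (Fact.out : p.Prime).two_le
  have hppos : 0 < p := by omega
  have hfinj : Function.Injective (algebraMap K Kv) := RingHom.injective _
  haveI : CharP Kv p := charP_of_injective_ringHom hfinj p
  set r : ℝ := q K x with hr
  have hr0 : 0 ≤ r := q_nonneg x
  -- the upper bound via Frobenius
  have hupper : ∀ m : ℕ, q K (x ^ p ^ m) ≤ r ^ p ^ m := by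
    intro m
    by_contra hlt
    push_neg at hlt
    have htend : Filter.Tendsto (fun ε : ℝ => (r + ε) ^ p ^ m) (nhdsWithin 0 (Set.Ioi 0))
        (nhds (r ^ p ^ m)) := by
      have ht : Filter.Tendsto (fun ε : ℝ => (r + ε) ^ p ^ m) (nhds 0)
          (nhds ((r + 0) ^ p ^ m)) := (Continuous.tendsto (by continuity) 0)
      simpa using ht.mono_left nhdsWithin_le_nhds
    have hev : ∀ᶠ ε in nhdsWithin (0 : ℝ) (Set.Ioi 0),
        (r + ε) ^ p ^ m < q K (x ^ p ^ m) := htend.eventually (eventually_lt_nhds hlt)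
    obtain ⟨ε, hεlt, hεpos⟩ := (hev.and self_mem_nhdsWithin).exists
    obtain ⟨a, ha⟩ := q_exists_lt (K := K) x hεpos
    have hle1 : q K (x ^ p ^ m) ≤ ‖x ^ p ^ m - algebraMap K Kv (a ^ p ^ m)‖ := q_le _ _
    rw [map_pow, ← sub_pow_char_pow, norm_pow] at hle1
    have hle2 : ‖x - algebraMap K Kv a‖ ^ p ^ m ≤ (r + ε) ^ p ^ m :=
      pow_le_pow_left₀ (norm_nonneg _) ha.le _
    have := hεlt
    linarith
  -- membership helpers
  have hmem1 : ∀ N : ℕ, 0 < N → ∀ a : K, algebraMap K Kv a ∈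
      Submodule.span K (Set.range fun j : Fin N => x ^ (j : ℕ)) := by
    intro N hN a
    have h1 : (x ^ ((⟨0, hN⟩ : Fin N) : ℕ)) ∈
        Submodule.span K (Set.range fun j : Fin N => x ^ (j : ℕ)) :=
      Submodule.subset_span ⟨⟨0, hN⟩, rfl⟩
    have : algebraMap K Kv a = a • x ^ ((⟨0, hN⟩ : Fin N) : ℕ) := by
      simp [Algebra.smul_def]
    rw [this]
    exact Submodule.smul_mem _ _ h1
  -- r_m = r ^ p ^ m
  have hrho : ∀ m : ℕ, q K (x ^ p ^ m) = r ^ p ^ m := by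
    intro m
    refine le_antisymm (hupper m) (le_q fun a => ?_)
    exact key_pow hiso x (p ^ m) _ (hmem1 _ (Nat.pow_pos hppos) a)
  refine ⟨?_, ?_⟩
  · -- part 1
    intro m hm
    constructor
    · exact hupper m
    · -- distance to the span
      have hne : ((Submodule.span K (Set.range fun j : Fin (p ^ (m - 1) + 1) =>
          x ^ (j : ℕ)) : Submodule K Kv) : Set Kv).Nonempty := ⟨0, Submodule.zero_mem _⟩
      by_contra hlt
      push_neg at hlt
      obtain ⟨y, hy, hylt⟩ := (Metric.infDist_lt_iff hne).mp hlt
      rw [dist_eq_norm] at hylt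
      have hsub : y ∈ Submodule.span K (Set.range fun j : Fin (p ^ m) => x ^ (j : ℕ)) := by
        refine Submodule.span_mono ?_ hy
        rintro _ ⟨j, rfl⟩
        have hjlt : (j : ℕ) < p ^ m := by
          have h1 : (j : ℕ) < p ^ (m - 1) + 1 := j.isLt
          have h2 : p ^ (m - 1) * p = p ^ m := by
            rw [← pow_succ]; congr 1; omega
          have h3 : p ^ (m - 1) * 2 ≤ p ^ (m - 1) * p := Nat.mul_le_mul_left _ hp2
          have hpos : 1 ≤ p ^ (m - 1) := Nat.one_le_pow _ _ hppos
          omega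
        exact ⟨⟨(j : ℕ), hjlt⟩, rfl⟩
      exact absurd (key_pow hiso x (p ^ m) y hsub) (not_le.mpr hylt)
  · -- part 2: orthogonality
    -- lower bound by induction
    have hlow : ∀ n : ℕ, ∀ c : Fin n → K, ∀ i : Fin n,
        ‖c i‖ * r ^ p ^ (i : ℕ) ≤ q K (∑ i, algebraMap K Kv (c i) * x ^ p ^ (i : ℕ)) := by
      intro n
      induction n with
      | zero => exact fun c i => i.elim0
      | succ n ih =>
        intro c i
        have hsum : (∑ j : Fin (n + 1), algebraMap K Kv (c j) * x ^ p ^ (j : ℕ)) =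
            (∑ j : Fin n, algebraMap K Kv (c j.castSucc) * x ^ p ^ (j : ℕ)) +
              algebraMap K Kv (c (Fin.last n)) * x ^ p ^ n := by
          rw [Fin.sum_univ_castSucc]
          simp
        set S' : Kv := ∑ j : Fin n, algebraMap K Kv (c j.castSucc) * x ^ p ^ (j : ℕ) with hS'
        rcases eq_or_ne (c (Fin.last n)) 0 with hc0 | hc0
        · -- top coefficient zero
          rw [hsum, hc0, map_zero, zero_mul, add_zero]
          refine Fin.lastCases ?_ (fun j => ?_) i
          · rw [hc0]
            simp only [norm_zero, zero_mul]
            exact q_nonneg _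
          · simpa using ih (fun j => c j.castSucc) j
        · -- top coefficient nonzero
          have hkey : ‖c (Fin.last n)‖ * r ^ p ^ n ≤
              q K (∑ j : Fin (n + 1), algebraMap K Kv (c j) * x ^ p ^ (j : ℕ)) := by
            refine le_q fun a => ?_
            set cl := c (Fin.last n) with hcl
            set z : Kv := algebraMap K Kv cl⁻¹ * (algebraMap K Kv a - S') with hz
            have hclz : algebraMap K Kv cl * z = algebraMap K Kv a - S' := by
              rw [hz, ← mul_assoc, ← map_mul, mul_inv_cancel₀ hc0, map_one, one_mul]
            have hfactor : (∑ j : Fin (n + 1), algebraMap K Kv (c j) * x ^ p ^ (j : ℕ)) -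
                algebraMap K Kv a = algebraMap K Kv cl * (x ^ p ^ n - z) := by
              rw [hsum, mul_sub, hclz]
              ring
            have hzmem : z ∈ Submodule.span K (Set.range fun j : Fin (p ^ n) => x ^ (j : ℕ)) := by
              have hamem := hmem1 (p ^ n) (Nat.pow_pos hppos) a
              have hS'mem : S' ∈
                  Submodule.span K (Set.range fun j : Fin (p ^ n) => x ^ (j : ℕ)) := by
                refine Submodule.sum_mem _ fun j _ => ?_
                have hjlt : p ^ (j : ℕ) < p ^ n :=
                  Nat.pow_lt_pow_right (by omega) j.isLt
                have hmm : (x ^ p ^ (j : ℕ)) ∈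
                    Submodule.span K (Set.range fun j : Fin (p ^ n) => x ^ (j : ℕ)) :=
                  Submodule.subset_span ⟨⟨p ^ (j : ℕ), hjlt⟩, rfl⟩
                have : algebraMap K Kv (c j.castSucc) * x ^ p ^ (j : ℕ) =
                    c j.castSucc • x ^ p ^ (j : ℕ) := by rw [Algebra.smul_def]
                rw [this]
                exact Submodule.smul_mem _ _ hmm
              have : z = cl⁻¹ • (algebraMap K Kv a - S') := by rw [Algebra.smul_def]
              rw [this]
              exact Submodule.smul_mem _ _ (Submodule.sub_mem _ hamem hS'mem)
            rw [hfactor, norm_mul, hiso]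
            exact mul_le_mul_of_nonneg_left (key_pow hiso x (p ^ n) z hzmem) (norm_nonneg _)
          refine Fin.lastCases ?_ (fun j => ?_) i
          · simpa using hkey
          · -- lower indices: remove the top term
            have hql : ‖c j.castSucc‖ * r ^ p ^ (j : ℕ) ≤ q K S' := by
              simpa using ih (fun j => c j.castSucc) j
            have hS'le : q K S' ≤ q K (∑ j : Fin (n + 1),
                algebraMap K Kv (c j) * x ^ p ^ (j : ℕ)) := by
              have h1 : S' = (∑ j : Fin (n + 1), algebraMap K Kv (c j) * x ^ p ^ (j : ℕ)) +
                  (-(algebraMap K Kv (c (Fin.last n)) * x ^ p ^ n)) := by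
                rw [hsum]; ring
              have h2 : q K (-(algebraMap K Kv (c (Fin.last n)) * x ^ p ^ n)) ≤
                  q K (∑ j : Fin (n + 1), algebraMap K Kv (c j) * x ^ p ^ (j : ℕ)) := by
                rw [q_neg]
                refine le_trans (q_smul_le hiso _ _) ?_
                rw [hrho n]
                exact hkey
              calc q K S' ≤ max (q K (∑ j : Fin (n + 1),
                    algebraMap K Kv (c j) * x ^ p ^ (j : ℕ)))
                    (q K (-(algebraMap K Kv (c (Fin.last n)) * x ^ p ^ n))) := by
                    rw [h1]; exact q_add_le _ _
                _ ≤ _ := max_le le_rfl h2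
            calc ‖c j.castSucc‖ * r ^ p ^ ((j.castSucc : Fin (n+1)) : ℕ) =
                  ‖c j.castSucc‖ * r ^ p ^ (j : ℕ) := by simp
              _ ≤ q K S' := hql
              _ ≤ _ := hS'le
    -- final equality
    intro n c
    rcases Nat.eq_zero_or_pos n with rfl | hn
    · rw [show (∑ i : Fin 0, algebraMap K Kv (c i) * x ^ p ^ (i : ℕ)) = 0 from
        Finset.sum_empty, ← q_def, q_zero]
      exact (Real.iSup_of_isEmpty _).symm
    · haveI : NeZero n := ⟨by omega⟩
      set g : Fin n → ℝ := fun i => ‖c i‖ *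
        Metric.infDist (x ^ p ^ (i : ℕ)) (Set.range (algebraMap K Kv)) with hg
      have hgr : ∀ i, g i = ‖c i‖ * r ^ p ^ (i : ℕ) := by
        intro i
        rw [hg]
        simp only []
        rw [← q_def, hrho]
      rw [← q_def]
      refine le_antisymm ?_ ?_
      · obtain ⟨j, hj⟩ := Finite.exists_max g
        have hgj0 : 0 ≤ g j :=
          le_trans (mul_nonneg (norm_nonneg _) Metric.infDist_nonneg) (hj ⟨0, by omega⟩)
        have hle : q K (∑ i, algebraMap K Kv (c i) * x ^ p ^ (i : ℕ)) ≤ g j := by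
          refine q_sum_le _ hgj0 fun i => ?_
          refine le_trans (q_smul_le hiso _ _) (le_trans ?_ (hj i))
          rw [hg]
          simp only []
          rw [← q_def]
        exact le_trans hle (le_ciSup (Set.Finite.bddAbove (Set.finite_range g)) j)
      · refine ciSup_le fun i => ?_
        rw [hgr i]
        exact hlow n c i
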